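/- Let N = hk and define u on ℝ^N by u e_j = e_l/√k for j in the l-th block A_l of a partition of {1,…,N} into h blocks of size k each. Then ‖u‖ = 1 and the squared Hilbert–Schmidt norm of u equals h. Moreover, for any diagonal operator Δ on ℝ^N of rank at most n, ‖u(id − Δ)‖ ≥ √((N−n)/N). -/

import Mathlib

open Finset

namespace Stmt18Aux

noncomputable def bIdx (k : ℕ) {N : ℕ} (j : Fin N) : Fin N :=
  ⟨j.val / k, lt_of_le_of_lt (Nat.div_le_self _ _) j.isLt⟩

lemma sum_single_apply {N : ℕ} (T : Finset (Fin N)) (i : Fin N) :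
    (∑ j ∈ T, EuclideanSpace.single j (1:ℝ)) i = if i ∈ T then 1 else 0 := by
  classical
  rw [WithLp.ofLp_sum, Finset.sum_apply]
  simp [EuclideanSpace.single_apply]

lemma norm_sum_single {N : ℕ} (T : Finset (Fin N)) :
    ‖(∑ j ∈ T, EuclideanSpace.single j (1:ℝ))‖ = Real.sqrt T.card := by
  classical
  rw [EuclideanSpace.norm_eq]
  congr 1
  have h1 : ∀ i : Fin N, ‖(∑ j ∈ T, EuclideanSpace.single j (1:ℝ)) i‖ ^ 2
      = if i ∈ T then 1 else 0 := by
    intro i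
    rw [sum_single_apply]
    split <;> simp
  rw [Finset.sum_congr rfl fun i _ => h1 i]
  simp

lemma apply_eq {k N : ℕ}
    (u : EuclideanSpace ℝ (Fin N) →L[ℝ] EuclideanSpace ℝ (Fin N))
    (hu : ∀ j : Fin N, u (EuclideanSpace.single j 1) =
      (1 / Real.sqrt k) • EuclideanSpace.single (bIdx k j) 1)
    (x : EuclideanSpace ℝ (Fin N)) (i : Fin N) :
    u x i = (1 / Real.sqrt k) * ∑ j ∈ Finset.univ.filter (fun j => bIdx k j = i), x j := by
  classical
  have hx : x = ∑ j : Fin N, x j • EuclideanSpace.single j (1:ℝ) := by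
    ext m
    rw [WithLp.ofLp_sum, Finset.sum_apply]
    simp [EuclideanSpace.single_apply]
  calc u x i = (∑ j : Fin N, x j • u (EuclideanSpace.single j (1:ℝ))) i := by
        conv_lhs => rw [hx]
        rw [map_sum]
        simp
    _ = ∑ j : Fin N, x j * ((1 / Real.sqrt k) * (if i = bIdx k j then 1 else 0)) := by
        rw [WithLp.ofLp_sum, Finset.sum_apply]
        refine Finset.sum_congr rfl fun j _ => ?_
        rw [hu j]
        simp [EuclideanSpace.single_apply, mul_comm]
    _ = (1 / Real.sqrt k) * ∑ j ∈ Finset.univ.filter (fun j => bIdx k j = i), x j := by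
        rw [Finset.mul_sum, Finset.sum_filter]
        refine Finset.sum_congr rfl fun j _ => ?_
        by_cases hij : bIdx k j = i
        · simp [hij, mul_comm]
        · have h2 : ¬ (i = bIdx k j) := fun hh => hij hh.symm
          simp [hij, h2]

lemma fiber_card_le {k N : ℕ} (hk : 0 < k) (i : Fin N) :
    (Finset.univ.filter (fun j : Fin N => bIdx k j = i)).card ≤ k := by
  classical
  have := Finset.card_le_card_of_injOn (fun j : Fin N => j.val % k)
    (s := Finset.univ.filter (fun j : Fin N => bIdx k j = i)) (t := Finset.range k)
    (fun j _ => Finset.mem_range.2 (Nat.mod_lt _ hk)) ?_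
  · simpa using this
  · intro a ha b hb hab
    rw [Finset.mem_coe, Finset.mem_filter] at ha hb
    have ha' := congrArg Fin.val ha.2
    have hb' := congrArg Fin.val hb.2
    simp only [bIdx] at ha' hb'
    simp only at hab
    apply Fin.ext
    conv_lhs => rw [← Nat.div_add_mod a.val k]
    conv_rhs => rw [← Nat.div_add_mod b.val k]
    rw [ha', hb', hab]

lemma u_norm_le {k N : ℕ} (hk : 0 < k)
    (u : EuclideanSpace ℝ (Fin N) →L[ℝ] EuclideanSpace ℝ (Fin N))
    (hu : ∀ j : Fin N, u (EuclideanSpace.single j 1) =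
      (1 / Real.sqrt k) • EuclideanSpace.single (bIdx k j) 1)
    (x : EuclideanSpace ℝ (Fin N)) : ‖u x‖ ≤ ‖x‖ := by
  classical
  rw [EuclideanSpace.norm_eq, EuclideanSpace.norm_eq]
  apply Real.sqrt_le_sqrt
  have hkR : (0:ℝ) < k := by exact_mod_cast hk
  calc ∑ i : Fin N, ‖u x i‖ ^ 2
      ≤ ∑ i : Fin N, ∑ j ∈ Finset.univ.filter (fun j => bIdx k j = i), ‖x j‖ ^ 2 := by
        refine Finset.sum_le_sum fun i _ => ?_
        rw [apply_eq u hu, Real.norm_eq_abs, sq_abs, mul_pow]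
        have hs : (1 / Real.sqrt k) ^ 2 = 1 / k := by
          rw [div_pow, one_pow, Real.sq_sqrt (le_of_lt hkR)]
        rw [hs]
        have hcs := sq_sum_le_card_mul_sum_sq
          (s := Finset.univ.filter (fun j : Fin N => bIdx k j = i)) (f := fun j => x j)
        have hcard : ((Finset.univ.filter (fun j : Fin N => bIdx k j = i)).card : ℝ) ≤ k := by
          exact_mod_cast fiber_card_le hk i
        have hnn : (0:ℝ) ≤ ∑ j ∈ Finset.univ.filter (fun j : Fin N => bIdx k j = i),
            (x j) ^ 2 := Finset.sum_nonneg fun j _ => sq_nonneg _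
        calc 1 / (k:ℝ) * (∑ j ∈ Finset.univ.filter (fun j : Fin N => bIdx k j = i), x j) ^ 2
            ≤ 1 / (k:ℝ) * ((k:ℝ) * ∑ j ∈ Finset.univ.filter (fun j : Fin N => bIdx k j = i),
              (x j) ^ 2) := by
              apply mul_le_mul_of_nonneg_left _ (by positivity)
              exact hcs.trans (mul_le_mul_of_nonneg_right hcard hnn)
          _ = ∑ j ∈ Finset.univ.filter (fun j : Fin N => bIdx k j = i), (x j) ^ 2 := by
              field_simp
          _ = ∑ j ∈ Finset.univ.filter (fun j : Fin N => bIdx k j = i), ‖x j‖ ^ 2 := by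
              simp [Real.norm_eq_abs, sq_abs]
    _ = ∑ j : Fin N, ‖x j‖ ^ 2 := by
        exact Finset.sum_fiberwise_of_maps_to (fun j _ => Finset.mem_univ _) _

lemma u_sum_single {k N : ℕ} (hk : 0 < k)
    (u : EuclideanSpace ℝ (Fin N) →L[ℝ] EuclideanSpace ℝ (Fin N))
    (hu : ∀ j : Fin N, u (EuclideanSpace.single j 1) =
      (1 / Real.sqrt k) • EuclideanSpace.single (bIdx k j) 1)
    (T : Finset (Fin N)) (l : Fin N) (hT : ∀ j ∈ T, bIdx k j = l) :
    ‖u (∑ j ∈ T, EuclideanSpace.single j (1:ℝ))‖ = T.card / Real.sqrt k := by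
  have hkR : (0:ℝ) < Real.sqrt k := Real.sqrt_pos.2 (by exact_mod_cast hk)
  rw [map_sum]
  have h1 : ∀ j ∈ T, u (EuclideanSpace.single j (1:ℝ))
      = (1 / Real.sqrt k) • EuclideanSpace.single l (1:ℝ) := by
    intro j hj; rw [hu j, hT j hj]
  rw [Finset.sum_congr rfl h1, Finset.sum_const, ← Nat.cast_smul_eq_nsmul ℝ, norm_smul,
    norm_smul]
  simp [EuclideanSpace.norm_single, abs_of_pos hkR, div_eq_mul_inv, one_div]

end Stmt18Aux

open Stmt18Aux in
/-- The block example: N = hk, u e_j = e_{⌊j/k⌋}/√k on the l-th block of size k.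
Then ‖u‖ = 1, the squared Hilbert–Schmidt norm is h, and for every diagonal
operator Δ of rank at most n one has ‖u(id − Δ)‖ ≥ √((N−n)/N). -/
theorem stmt_18 (h k N : ℕ) (hh : 0 < h) (hk : 0 < k) (hN : N = h * k)
    (u : EuclideanSpace ℝ (Fin N) →L[ℝ] EuclideanSpace ℝ (Fin N))
    (hu : ∀ j : Fin N, u (EuclideanSpace.single j 1) =
      (1 / Real.sqrt k) • EuclideanSpace.single
        (⟨j.val / k, lt_of_le_of_lt (Nat.div_le_self _ _) j.isLt⟩ : Fin N) 1) :
    ‖u‖ = 1 ∧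
    (∑ j : Fin N, ‖u (EuclideanSpace.single j 1)‖ ^ 2 = (h : ℝ)) ∧
    ∀ (n : ℕ) (Δ : EuclideanSpace ℝ (Fin N) →L[ℝ] EuclideanSpace ℝ (Fin N))
      (d : Fin N → ℝ),
      (∀ (z : EuclideanSpace ℝ (Fin N)) (j : Fin N), Δ z j = d j * z j) →
      {j : Fin N | d j ≠ 0}.ncard ≤ n →
      Real.sqrt (((N : ℝ) - n) / N) ≤
        ‖u.comp (ContinuousLinearMap.id ℝ (EuclideanSpace ℝ (Fin N)) - Δ)‖ := by
  classical
  have hu' : ∀ j : Fin N, u (EuclideanSpace.single j 1) =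
      (1 / Real.sqrt k) • EuclideanSpace.single (bIdx k j) 1 := hu
  have hNpos : 0 < N := by subst hN; exact Nat.mul_pos hh hk
  have hkR : (0:ℝ) < k := by exact_mod_cast hk
  have hsk : (0:ℝ) < Real.sqrt k := Real.sqrt_pos.2 hkR
  have hhR : (0:ℝ) < h := by exact_mod_cast hh
  -- ‖u‖ = 1
  have hnorm : ‖u‖ = 1 := by
    have hle : ‖u‖ ≤ 1 := u.opNorm_le_bound zero_le_one fun x => by
      simpa using u_norm_le hk u hu' x
    have hkN : k - 1 < N := by
      have : k ≤ N := hN ▸ Nat.le_mul_of_pos_left k hh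
      omega
    set T0 : Finset (Fin N) := Finset.Iic ⟨k-1, hkN⟩ with hT0def
    have hT0card : T0.card = k := by
      rw [hT0def, Fin.card_Iic]
      show (k - 1) + 1 = k
      omega
    have hT0 : ∀ j ∈ T0, bIdx k j = (⟨0, hNpos⟩ : Fin N) := by
      intro j hj
      rw [hT0def, Finset.mem_Iic, Fin.le_def] at hj
      have hj' : j.val ≤ k - 1 := hj
      apply Fin.ext
      show j.val / k = 0
      exact Nat.div_eq_of_lt (by omega)
    have huy : ‖u (∑ j ∈ T0, EuclideanSpace.single j (1:ℝ))‖ = k / Real.sqrt k := by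
      rw [u_sum_single hk u hu' T0 _ hT0, hT0card]
    have hyn : ‖(∑ j ∈ T0, EuclideanSpace.single j (1:ℝ))‖ = Real.sqrt k := by
      rw [norm_sum_single, hT0card]
    have hge : Real.sqrt k ≤ ‖u‖ * Real.sqrt k := by
      have h1 := u.le_opNorm (∑ j ∈ T0, EuclideanSpace.single j (1:ℝ))
      rw [huy, hyn] at h1
      have h2 : (k:ℝ) / Real.sqrt k = Real.sqrt k := by
        rw [eq_comm, eq_div_iff hsk.ne', ← Real.sqrt_mul_self hkR.le]
        rw [Real.sqrt_mul_self hkR.le]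
        exact (Real.mul_self_sqrt hkR.le)
      rwa [h2] at h1
    have h3 : 1 * Real.sqrt k ≤ ‖u‖ * Real.sqrt k := by rw [one_mul]; exact hge
    exact le_antisymm hle (le_of_mul_le_mul_right h3 hsk)
  refine ⟨hnorm, ?_, ?_⟩
  · -- Hilbert-Schmidt
    have h1 : ∀ j : Fin N, ‖u (EuclideanSpace.single j (1:ℝ))‖ ^ 2 = 1 / k := by
      intro j
      rw [hu' j, norm_smul, EuclideanSpace.norm_single]
      rw [Real.norm_eq_abs, abs_of_pos (by positivity), norm_one, mul_one]
      rw [div_pow, one_pow, Real.sq_sqrt hkR.le]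
    rw [Finset.sum_congr rfl fun j _ => h1 j, Finset.sum_const, Finset.card_univ,
      Fintype.card_fin, nsmul_eq_mul, hN]
    push_cast
    field_simp
  · intro n Δ d hΔ hn
    set C := ‖u.comp (ContinuousLinearMap.id ℝ (EuclideanSpace ℝ (Fin N)) - Δ)‖ with hC
    by_cases hnN : (N:ℝ) - n ≤ 0
    · have : ((N:ℝ) - n) / N ≤ 0 := div_nonpos_of_nonpos_of_nonneg hnN (Nat.cast_nonneg N)
      rw [Real.sqrt_eq_zero'.2 this]
      exact norm_nonneg _
    · push_neg at hnN
      set Zc := Finset.univ.filter (fun j : Fin N => d j ≠ 0) with hZcdef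
      set Z := Finset.univ.filter (fun j : Fin N => d j = 0) with hZdef
      have hZc : Zc.card ≤ n := by
        have hset : {j : Fin N | d j ≠ 0} = ↑Zc := by ext j; simp [hZcdef]
        rwa [hset, Set.ncard_coe_finset] at hn
      have hZZc : Z.card + Zc.card = N := by
        rw [hZdef, hZcdef]
        rw [Finset.card_filter_add_card_filter_not]
        simp
      have hZR : (N:ℝ) - n ≤ Z.card := by
        have h1 : (Zc.card : ℝ) ≤ n := by exact_mod_cast hZc
        have h2 : (Z.card : ℝ) + Zc.card = N := by exact_mod_cast hZZc
        linarith
      have hhN : h - 1 < N := by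
        have : h ≤ N := hN ▸ Nat.le_mul_of_pos_right h hk
        omega
      set t : Finset (Fin N) := Finset.Iic ⟨h-1, hhN⟩ with htdef
      have htc : t.card = h := by
        rw [htdef, Fin.card_Iic]
        show (h - 1) + 1 = h
        omega
      have hmaps : ∀ j ∈ Z, bIdx k j ∈ t := by
        intro j _
        rw [htdef, Finset.mem_Iic, Fin.le_def]
        show j.val / k ≤ h - 1
        have h1 : j.val < h * k := hN ▸ j.isLt
        have h2 : j.val / k < h := Nat.div_lt_iff_lt_mul hk |>.2 (by omega)
        omega
      have hcard : Z.card = ∑ l ∈ t, (Z.filter (fun j => bIdx k j = l)).card :=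
        Finset.card_eq_sum_card_fiberwise hmaps
      have hne : t.Nonempty := ⟨⟨h-1, hhN⟩, Finset.mem_Iic.2 le_rfl⟩
      have hle2 : ∑ _l ∈ t, ((Z.card : ℝ) / h) ≤
          ∑ l ∈ t, ((Z.filter (fun j => bIdx k j = l)).card : ℝ) := by
        rw [Finset.sum_const, htc, nsmul_eq_mul, mul_div_cancel₀ _ hhR.ne']
        exact_mod_cast hcard.le
      obtain ⟨l, _, hml⟩ := Finset.exists_le_of_sum_le (s := t)
        (f := fun _ => (Z.card : ℝ) / h)
        (g := fun l => ((Z.filter (fun j => bIdx k j = l)).card : ℝ)) hne hle2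
      set T := Z.filter (fun j => bIdx k j = l) with hTdef
      set m := T.card with hm
      have hm1 : ((N:ℝ) - n) / h ≤ m :=
        le_trans ((div_le_div_iff_of_pos_right hhR).2 hZR) hml
      have hm0 : (0:ℝ) < m := lt_of_lt_of_le (by positivity) hm1
      have hsm : (0:ℝ) < Real.sqrt m := Real.sqrt_pos.2 hm0
      set y := ∑ j ∈ T, EuclideanSpace.single j (1:ℝ) with hydef
      have hTl : ∀ j ∈ T, bIdx k j = l := fun j hj => (Finset.mem_filter.1 hj).2
      have hTd : ∀ j ∈ T, d j = 0 := fun j hj =>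
        (Finset.mem_filter.1 (Finset.mem_filter.1 hj).1).2
      have hfix : (ContinuousLinearMap.id ℝ (EuclideanSpace ℝ (Fin N)) - Δ) y = y := by
        ext i
        have hΔy : Δ y i = d i * y i := hΔ y i
        have h0 : d i * y i = 0 := by
          by_cases hiT : i ∈ T
          · rw [hTd i hiT, zero_mul]
          · rw [hydef, sum_single_apply, if_neg hiT, mul_zero]
        show y i - Δ y i = y i
        rw [hΔy, h0, sub_zero]
      have hyn : ‖y‖ = Real.sqrt m := by rw [hydef, norm_sum_single]
      have huy : ‖u y‖ = (m:ℝ) / Real.sqrt k := u_sum_single hk u hu' T l hTl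
      have key : (m:ℝ) / Real.sqrt k ≤ C * Real.sqrt m := by
        have h1 := (u.comp (ContinuousLinearMap.id ℝ (EuclideanSpace ℝ (Fin N)) - Δ)).le_opNorm y
        rw [ContinuousLinearMap.comp_apply, hfix, huy, hyn] at h1
        exact h1
      have hfinal : Real.sqrt (((N:ℝ) - n) / N) * Real.sqrt m ≤ C * Real.sqrt m := by
        have h1 : ((N:ℝ) - n) / N ≤ (m:ℝ) / k := by
          have hNR : (N:ℝ) = h * k := by exact_mod_cast hN
          have hm1' : ((h:ℝ) * k - n) / h ≤ m := by rwa [hNR] at hm1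
          rw [hNR, ← div_div]
          exact (div_le_div_iff_of_pos_right hkR).2 hm1'
        calc Real.sqrt (((N:ℝ) - n) / N) * Real.sqrt m
            ≤ Real.sqrt ((m:ℝ) / k) * Real.sqrt m := by
              apply mul_le_mul_of_nonneg_right (Real.sqrt_le_sqrt h1) hsm.le
          _ = (m:ℝ) / Real.sqrt k := by
              rw [← Real.sqrt_mul (div_nonneg hm0.le hkR.le), div_mul_eq_mul_div,
                Real.sqrt_div (mul_self_nonneg _), Real.sqrt_mul_self hm0.le]
          _ ≤ C * Real.sqrt m := key
      exact le_of_mul_le_mul_right hfinal hsm
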